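/- Let a, b ∈ ℝ with a ≤ b, let h(z) = erf((z − a)/√2) − erf((z − b)/√2), let m = (a + b)/2, and let ž ≤ ẑ be reals. Let z∗ be the endpoint of [ž, ẑ] farther from m, i.e., z∗ = ž if |ž − m| ≥ |ẑ − m| and z∗ = ẑ otherwise. Then h(z∗) ≤ h(z) for every z ∈ [ž, ẑ]. -/

import Mathlib

/-- The Gauss error function `erf x = (2/√π) ∫₀ˣ exp (−t²) dt`. -/
noncomputable def erf (x : ℝ) : ℝ :=
  (2 / Real.sqrt Real.pi) * ∫ t in (0:ℝ)..x, Real.exp (-t ^ 2)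

lemma erf_hasDerivAt (x : ℝ) :
    HasDerivAt erf (2 / Real.sqrt Real.pi * Real.exp (-x ^ 2)) x := by
  have hc : Continuous fun t : ℝ => Real.exp (-t ^ 2) := by continuity
  have h1 := (hc.integral_hasStrictDerivAt 0 x).hasDerivAt
  exact HasDerivAt.const_mul _ h1

lemma erf_neg (x : ℝ) : erf (-x) = -erf x := by
  unfold erf
  have h := intervalIntegral.integral_comp_neg (a := (0:ℝ)) (b := x)
    (fun t => Real.exp (-t ^ 2))
  simp only [neg_zero, neg_sq] at h
  rw [intervalIntegral.integral_symm, ← h]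
  ring

lemma hfun_hasDerivAt (a b z : ℝ) :
    HasDerivAt (fun w => erf ((w - a) / Real.sqrt 2) - erf ((w - b) / Real.sqrt 2))
      (2 / Real.sqrt Real.pi * Real.exp (-((z - a) / Real.sqrt 2) ^ 2) * (1 / Real.sqrt 2)
        - 2 / Real.sqrt Real.pi * Real.exp (-((z - b) / Real.sqrt 2) ^ 2) * (1 / Real.sqrt 2)) z := by
  have h1 : HasDerivAt (fun w : ℝ => (w - a) / Real.sqrt 2) (1 / Real.sqrt 2) z := by
    simpa using ((hasDerivAt_id z).sub_const a).div_const (Real.sqrt 2)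
  have h2 : HasDerivAt (fun w : ℝ => (w - b) / Real.sqrt 2) (1 / Real.sqrt 2) z := by
    simpa using ((hasDerivAt_id z).sub_const b).div_const (Real.sqrt 2)
  exact ((erf_hasDerivAt _).comp z h1).sub ((erf_hasDerivAt _).comp z h2)

lemma hfun_antitone (a b : ℝ) (hab : a ≤ b) :
    AntitoneOn (fun z => erf ((z - a) / Real.sqrt 2) - erf ((z - b) / Real.sqrt 2))
      (Set.Ici ((a + b) / 2)) := by
  have hs2 : (0:ℝ) < Real.sqrt 2 := Real.sqrt_pos.2 two_pos
  have hsq : Real.sqrt 2 ^ 2 = 2 := Real.sq_sqrt (by norm_num)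
  apply antitoneOn_of_deriv_nonpos (convex_Ici _)
  · exact (Differentiable.continuous
      (fun z => (hfun_hasDerivAt a b z).differentiableAt)).continuousOn
  · intro z _
    exact (hfun_hasDerivAt a b z).differentiableAt.differentiableWithinAt
  · intro z hzin
    rw [interior_Ici] at hzin
    rw [(hfun_hasDerivAt a b z).deriv]
    have hpi : (0:ℝ) ≤ 2 / Real.sqrt Real.pi := by positivity
    have hexp : Real.exp (-((z - a) / Real.sqrt 2) ^ 2)
        ≤ Real.exp (-((z - b) / Real.sqrt 2) ^ 2) := by
      apply Real.exp_le_exp.2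
      rw [div_pow, div_pow, hsq]
      have : (z - b) ^ 2 ≤ (z - a) ^ 2 := by nlinarith [(Set.mem_Ioi.mp hzin).le]
      linarith
    have h1 := mul_le_mul_of_nonneg_left hexp hpi
    have h2 := mul_le_mul_of_nonneg_right h1 (le_of_lt (one_div_pos.2 hs2))
    linarith

lemma hfun_symm (a b z : ℝ) :
    erf ((a + b - z - a) / Real.sqrt 2) - erf ((a + b - z - b) / Real.sqrt 2)
      = erf ((z - a) / Real.sqrt 2) - erf ((z - b) / Real.sqrt 2) := by
  have e1 : (a + b - z - a) / Real.sqrt 2 = -((z - b) / Real.sqrt 2) := by ring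
  have e2 : (a + b - z - b) / Real.sqrt 2 = -((z - a) / Real.sqrt 2) := by ring
  rw [e1, e2, erf_neg, erf_neg]; ring

/-- `h w = h (m + |w - m|)`. -/
lemma hfun_reflect (a b w : ℝ) :
    erf ((w - a) / Real.sqrt 2) - erf ((w - b) / Real.sqrt 2)
      = erf (((a + b) / 2 + |w - (a + b) / 2| - a) / Real.sqrt 2)
        - erf (((a + b) / 2 + |w - (a + b) / 2| - b) / Real.sqrt 2) := by
  rcases le_total ((a + b) / 2) w with h | h
  · rw [abs_of_nonneg (by linarith)]; ring_nf
  · rw [abs_of_nonpos (by linarith)]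
    have e : (a + b) / 2 + -(w - (a + b) / 2) = a + b - w := by ring
    rw [e]
    exact (hfun_symm a b w).symm

/-- the minimum of `h z = erf((z−a)/√2) − erf((z−b)/√2)` over an
interval `[ž, ẑ]` of candidate means is attained at the endpoint of `[ž, ẑ]` farther
from the midpoint `m = (a+b)/2`. -/
theorem erf_diff_min_at_farther_endpoint
    (a b : ℝ) (hab : a ≤ b) (zlo zhi : ℝ) (hz : zlo ≤ zhi)
    (zstar : ℝ)
    (hstar : zstar =
      if |zhi - (a + b) / 2| ≤ |zlo - (a + b) / 2| then zlo else zhi) :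
    ∀ z ∈ Set.Icc zlo zhi,
      erf ((zstar - a) / Real.sqrt 2) - erf ((zstar - b) / Real.sqrt 2) ≤
        erf ((z - a) / Real.sqrt 2) - erf ((z - b) / Real.sqrt 2) := by
  intro z hzmem
  obtain ⟨hz1, hz2⟩ := hzmem
  set m : ℝ := (a + b) / 2 with hm
  have key : |z - m| ≤ |zstar - m| := by
    rw [hstar]
    split_ifs with hcond
    · rcases le_total z m with h | h
      · rw [abs_of_nonpos (by linarith)]
        calc -(z - m) ≤ -(zlo - m) := by linarith
          _ ≤ |zlo - m| := neg_le_abs _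
      · rw [abs_of_nonneg (by linarith)]
        calc z - m ≤ zhi - m := by linarith
          _ ≤ |zhi - m| := le_abs_self _
          _ ≤ |zlo - m| := hcond
    · push_neg at hcond
      rcases le_total z m with h | h
      · rw [abs_of_nonpos (by linarith)]
        calc -(z - m) ≤ -(zlo - m) := by linarith
          _ ≤ |zlo - m| := neg_le_abs _
          _ ≤ |zhi - m| := hcond.le
      · rw [abs_of_nonneg (by linarith)]
        calc z - m ≤ zhi - m := by linarith
          _ ≤ |zhi - m| := le_abs_self _
  rw [hfun_reflect a b z, hfun_reflect a b zstar]
  exact hfun_antitone a b hab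
    (Set.mem_Ici.2 (by simp [abs_nonneg]))
    (Set.mem_Ici.2 (by simp [abs_nonneg]))
    (by linarith)
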